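/- For all integers 1 ≤ j ≤ k ≤ d, the infimum of f_{[k]}(x₁, x₂) over all x₁, x₂ ∈ ℝ^{j,d} equals −(L/8)·(k²/(k+1)² + j/(k+1)²), and this infimum is attained. -/

import Mathlib

open Matrix

/-- The matrix A_{1,[k]} (1-based indices in the paper; here 0-based `Fin d`). -/
def A1 (d k : ℕ) : Matrix (Fin d) (Fin d) ℝ := fun i j =>
  if i = j then (if (i : ℕ) + 1 ≤ k then 1 else 0)
  else if ((i : ℕ) + 1 = (j : ℕ) ∧ Even ((i : ℕ) + 1) ∧ (j : ℕ) + 1 ≤ k) ∨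
          ((j : ℕ) + 1 = (i : ℕ) ∧ Even ((j : ℕ) + 1) ∧ (i : ℕ) + 1 ≤ k) then -1
  else 0

/-- The matrix A_{2,[k]}. -/
def A2 (d k : ℕ) : Matrix (Fin d) (Fin d) ℝ := fun i j =>
  if i = j then (if (i : ℕ) + 1 ≤ k then 1 else 0)
  else if ((i : ℕ) + 1 = (j : ℕ) ∧ Odd ((i : ℕ) + 1) ∧ (j : ℕ) + 1 ≤ k) ∨
          ((j : ℕ) + 1 = (i : ℕ) ∧ Odd ((j : ℕ) + 1) ∧ (i : ℕ) + 1 ≤ k) then -1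
  else 0

/-- a_{[k]} = Σ_{i=1}^k (−1)^{i+1} e_i (1-based), i.e. entries alternate
1, −1, …, with k nonzeros. -/
def avec (d k : ℕ) : Fin d → ℝ := fun i =>
  if (i : ℕ) < k then (-1) ^ (i : ℕ) else 0

/-- The first canonical basis vector e₁ of ℝ^d. -/
def e1 (d : ℕ) : Fin d → ℝ := fun i => if (i : ℕ) = 0 then 1 else 0

/-- ℝ^{j,d} = span{e₁, …, e_j}. -/
def Rj (d j : ℕ) : Set (Fin d → ℝ) :=
  {x | ∀ i : Fin d, j ≤ (i : ℕ) → x i = 0}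

/-- fₖ(x₁, x₂) = (L/8)x₁ᵀA₁x₁ − (L/4)e₁ᵀx₁ + (L/8)x₂ᵀA₂x₂
    + (L/(4(k+1)))⟨a_{[k]}, x₁ − x₂⟩. -/
noncomputable def fk (d : ℕ) (L : ℝ) (k : ℕ) (x1 x2 : Fin d → ℝ) : ℝ :=
  L / 8 * (x1 ⬝ᵥ (A1 d k).mulVec x1) - L / 4 * (e1 d ⬝ᵥ x1)
    + L / 8 * (x2 ⬝ᵥ (A2 d k).mulVec x2)
    + L / (4 * ((k : ℝ) + 1)) * (avec d k ⬝ᵥ (x1 - x2))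

/-! ### Auxiliary machinery -/

open Finset

/-- extension of a vector on `Fin d` to all of `ℕ` by zero -/
noncomputable def zext (d : ℕ) (x : Fin d → ℝ) : ℕ → ℝ :=
  fun n => if h : n < d then x ⟨n, h⟩ else 0

lemma zext_apply (d : ℕ) (x : Fin d → ℝ) (i : Fin d) : zext d x i = x i := by
  simp [zext, i.isLt]

lemma zext_zero {d j : ℕ} {x : Fin d → ℝ} (hx : x ∈ Rj d j) {n : ℕ} (h : j ≤ n) :
    zext d x n = 0 := by
  unfold zext
  split
  · exact hx _ h
  · rfl

/-- diagonal entry at ℕ level -/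
def dg (k n m : ℕ) : ℝ := if m = n ∧ n + 1 ≤ k then 1 else 0

/-- superdiagonal entry at ℕ level, parametrized by parity predicate -/
def uu (p : ℕ → Prop) [DecidablePred p] (k n m : ℕ) : ℝ :=
  if n + 1 = m ∧ p (n + 1) ∧ m + 1 ≤ k then -1 else 0

set_option maxHeartbeats 1000000 in
lemma A1_decomp (d k : ℕ) (i m : Fin d) :
    A1 d k i m = dg k i m + uu Even k i m + uu Even k m i := by
  simp only [A1, dg, uu, Fin.ext_iff]
  split_ifs <;> first | (exfalso; casesm* (_ ∧ _), (_ ∨ _) <;> omega) | tauto | norm_num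

set_option maxHeartbeats 1000000 in
lemma A2_decomp (d k : ℕ) (i m : Fin d) :
    A2 d k i m = dg k i m + uu Odd k i m + uu Odd k m i := by
  simp only [A2, dg, uu, Fin.ext_iff]
  split_ifs <;> first | (exfalso; casesm* (_ ∧ _), (_ ∨ _) <;> omega) | tauto | norm_num

/-- rewrite the quadratic form as a double sum over `range d` at ℕ level -/
lemma sum_fin_eq_sum_range (d : ℕ) (G : Fin d → ℝ) (F : ℕ → ℝ)
    (h : ∀ i : Fin d, G i = F i) : ∑ i : Fin d, G i = ∑ n ∈ range d, F n :=
  (Finset.sum_congr rfl fun i _ => h i).trans (Fin.sum_univ_eq_sum_range F d)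

/-- rewrite the quadratic form as a double sum over `range d` at ℕ level -/
lemma dot_mulVec_eq (d : ℕ) (A : Matrix (Fin d) (Fin d) ℝ) (e : ℕ → ℕ → ℝ)
    (hA : ∀ i m : Fin d, A i m = e i m) (x : Fin d → ℝ) :
    x ⬝ᵥ A.mulVec x
      = ∑ n ∈ range d, ∑ m ∈ range d, zext d x n * (e n m * zext d x m) := by
  rw [dotProduct]
  refine sum_fin_eq_sum_range d _ _ fun i => ?_
  have h2 : A.mulVec x i = ∑ m ∈ range d, e (i : ℕ) m * zext d x m := by
    rw [mulVec, dotProduct]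
    exact sum_fin_eq_sum_range d _ _ fun m => by rw [hA, zext_apply]
  rw [h2, ← zext_apply d x i, Finset.mul_sum]

lemma quad_form (p : ℕ → Prop) [DecidablePred p] (d k j : ℕ) (hjk : j ≤ k) (hkd : k ≤ d)
    (y : ℕ → ℝ) (hy : ∀ n, j ≤ n → y n = 0) :
    ∑ n ∈ range d, ∑ m ∈ range d, y n * ((dg k n m + uu p k n m + uu p k m n) * y m)
    = ∑ n ∈ range j, y n ^ 2
      - 2 * ∑ n ∈ range j, (if p (n + 1) then y n * y (n + 1) else 0) := by
  have hjd : j ≤ d := hjk.trans hkd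
  have hsplit : ∑ n ∈ range d, ∑ m ∈ range d, y n * ((dg k n m + uu p k n m + uu p k m n) * y m)
      = (∑ n ∈ range d, ∑ m ∈ range d, y n * (dg k n m * y m))
        + (∑ n ∈ range d, ∑ m ∈ range d, y n * (uu p k n m * y m))
        + (∑ n ∈ range d, ∑ m ∈ range d, y m * (uu p k m n * y n)) := by
    rw [← Finset.sum_add_distrib, ← Finset.sum_add_distrib]
    refine Finset.sum_congr rfl fun n _ => ?_
    rw [← Finset.sum_add_distrib, ← Finset.sum_add_distrib]
    exact Finset.sum_congr rfl fun m _ => by ring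
  have hcomm : ∑ n ∈ range d, ∑ m ∈ range d, y m * (uu p k m n * y n)
      = ∑ n ∈ range d, ∑ m ∈ range d, y n * (uu p k n m * y m) := Finset.sum_comm
  have hdg : ∑ n ∈ range d, ∑ m ∈ range d, y n * (dg k n m * y m)
      = ∑ n ∈ range j, y n ^ 2 := by
    have step1 : ∀ n ∈ range d, ∑ m ∈ range d, y n * (dg k n m * y m)
        = (if n + 1 ≤ k then y n * y n else 0) := by
      intro n hn
      have hpt : ∀ m, y n * (dg k n m * y m)
          = if m = n then (if n + 1 ≤ k then y n * y n else 0) else 0 := by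
        intro m
        unfold dg
        by_cases h1 : m = n <;> by_cases h2 : n + 1 ≤ k <;>
          simp [h1, h2] <;> ring
      rw [Finset.sum_congr rfl fun m _ => hpt m, Finset.sum_ite_eq' (range d) n]
      simp [hn]
    rw [Finset.sum_congr rfl step1]
    rw [← Finset.sum_subset (Finset.range_subset_range.mpr hjd)
      (fun n _ hn => by
        have : j ≤ n := by simpa using hn
        simp [hy n this])]
    refine Finset.sum_congr rfl fun n hn => ?_
    have : n + 1 ≤ k := by have := Finset.mem_range.mp hn; omega
    simp [this]; ring
  have hu : ∑ n ∈ range d, ∑ m ∈ range d, y n * (uu p k n m * y m)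
      = - ∑ n ∈ range j, (if p (n + 1) then y n * y (n + 1) else 0) := by
    have step1 : ∀ n ∈ range d, ∑ m ∈ range d, y n * (uu p k n m * y m)
        = (if p (n + 1) ∧ n + 2 ≤ k then -(y n * y (n + 1)) else 0) := by
      intro n _
      have hpt : ∀ m, y n * (uu p k n m * y m)
          = if m = n + 1 then (if p (n + 1) ∧ n + 2 ≤ k then -(y n * y m) else 0) else 0 := by
        intro m
        unfold uu
        by_cases h1 : m = n + 1
        · subst h1
          by_cases h2 : p (n + 1) <;> by_cases h3 : n + 1 + 1 ≤ k <;>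
            simp [h2, h3] <;> ring
        · have : ¬(n + 1 = m ∧ p (n + 1) ∧ m + 1 ≤ k) := fun h => h1 h.1.symm
          simp [h1, this]; intro h; exact absurd h.symm h1
      rw [Finset.sum_congr rfl fun m _ => hpt m, Finset.sum_ite_eq' (range d) (n + 1)]
      by_cases hm : n + 1 ∈ range d
      · simp [hm]
      · have hge : d ≤ n + 1 := by simpa using hm
        have : ¬ (n + 2 ≤ k) := by omega
        simp [hm, this]
    rw [Finset.sum_congr rfl step1]
    rw [← Finset.sum_subset (Finset.range_subset_range.mpr hjd)
      (fun n _ hn => by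
        have : j ≤ n := by simpa using hn
        simp [hy n this])]
    rw [← Finset.sum_neg_distrib]
    refine Finset.sum_congr rfl fun n hn => ?_
    have hnj : n < j := Finset.mem_range.mp hn
    by_cases hp : p (n + 1)
    · by_cases h2 : n + 2 ≤ k
      · simp [hp, h2]
      · have : y (n + 1) = 0 := hy _ (by omega)
        simp [hp, h2, this]
    · simp [hp]
  rw [hsplit, hcomm, hdg, hu]
  ring

lemma Q1form (d k j : ℕ) (hjk : j ≤ k) (hkd : k ≤ d) (x : Fin d → ℝ) (hx : x ∈ Rj d j) :
    x ⬝ᵥ (A1 d k).mulVec x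
      = ∑ n ∈ range j, zext d x n ^ 2
        - 2 * ∑ n ∈ range j, (if Even (n + 1) then zext d x n * zext d x (n + 1) else 0) := by
  rw [dot_mulVec_eq d _ (fun n m => dg k n m + uu Even k n m + uu Even k m n)
    (A1_decomp d k) x]
  exact quad_form Even d k j hjk hkd _ (fun n h => zext_zero hx h)

lemma Q2form (d k j : ℕ) (hjk : j ≤ k) (hkd : k ≤ d) (x : Fin d → ℝ) (hx : x ∈ Rj d j) :
    x ⬝ᵥ (A2 d k).mulVec x
      = ∑ n ∈ range j, zext d x n ^ 2
        - 2 * ∑ n ∈ range j, (if Odd (n + 1) then zext d x n * zext d x (n + 1) else 0) := by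
  rw [dot_mulVec_eq d _ (fun n m => dg k n m + uu Odd k n m + uu Odd k m n)
    (A2_decomp d k) x]
  exact quad_form Odd d k j hjk hkd _ (fun n h => zext_zero hx h)

lemma e1form (d : ℕ) (hd : 1 ≤ d) (x : Fin d → ℝ) :
    e1 d ⬝ᵥ x = zext d x 0 := by
  rw [dotProduct]
  have : ∑ i : Fin d, e1 d i * x i
      = ∑ n ∈ range d, (if n = 0 then zext d x 0 else 0) := by
    refine sum_fin_eq_sum_range d _ _ fun i => ?_
    simp only [e1]
    by_cases h : (i : ℕ) = 0
    · have : zext d x 0 = x i := by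
        rw [← h, zext_apply]
      simp [h, this]
    · simp [h]
  rw [this, Finset.sum_ite_eq' (range d) 0]
  have h0 : (0 : ℕ) ∈ range d := Finset.mem_range.mpr hd
  simp [h0]

lemma avecform (d k j : ℕ) (hjk : j ≤ k) (hkd : k ≤ d)
    (x1 x2 : Fin d → ℝ) (h1 : x1 ∈ Rj d j) (h2 : x2 ∈ Rj d j) :
    avec d k ⬝ᵥ (x1 - x2)
      = ∑ n ∈ range j, (-1 : ℝ) ^ n * (zext d x1 n - zext d x2 n) := by
  rw [dotProduct]
  have step : ∑ i : Fin d, avec d k i * (x1 - x2) i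
      = ∑ n ∈ range d, (if n < k then (-1 : ℝ) ^ n * (zext d x1 n - zext d x2 n) else 0) := by
    refine sum_fin_eq_sum_range d _ _ fun i => ?_
    simp only [avec, Pi.sub_apply, zext_apply]
    by_cases h : (i : ℕ) < k <;> simp [h]
  rw [step, ← Finset.sum_subset (Finset.range_subset_range.mpr (hjk.trans hkd))
    (fun n _ hn => by
      have hjn : j ≤ n := by simpa using hn
      simp [zext_zero h1 hjn, zext_zero h2 hjn])]
  refine Finset.sum_congr rfl fun n hn => ?_
  have : n < k := lt_of_lt_of_le (Finset.mem_range.mp hn) hjk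
  simp [this]

lemma even_succ_iff (n : ℕ) : Even (n + 1) ↔ Odd n := by
  rw [Nat.even_add_one]
  exact Nat.not_even_iff_odd

lemma odd_succ_iff (n : ℕ) : Odd (n + 1) ↔ Even n := by
  rw [← Nat.not_even_iff_odd, Nat.even_add_one, not_not]

lemma shift_sum (p : ℕ → Prop) [DecidablePred p] (g : ℕ → ℝ) (j : ℕ) :
    ∑ n ∈ range j, (if p (n + 1) then g (n + 1) else 0)
      = ∑ n ∈ range j, (if p n ∧ n ≠ 0 then g n else 0)
        + (if p j ∧ j ≠ 0 then g j else 0) := by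
  have h2 := Finset.sum_range_succ' (fun m => if p m ∧ m ≠ 0 then g m else 0) j
  have h3 := Finset.sum_range_succ (fun m => if p m ∧ m ≠ 0 then g m else 0) j
  have hL : ∑ n ∈ range j, (if p (n + 1) then g (n + 1) else 0)
      = ∑ n ∈ range j, (if p (n + 1) ∧ n + 1 ≠ 0 then g (n + 1) else 0) :=
    Finset.sum_congr rfl fun n _ => by simp
  have hF0 : (if p 0 ∧ (0 : ℕ) ≠ 0 then g 0 else 0) = 0 := by simp
  rw [hF0, add_zero] at h2
  rw [hL, ← h2, h3]

lemma sum_if_and_ne_zero (p : ℕ → Prop) [DecidablePred p] (hp0 : p 0) (a : ℕ → ℝ)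
    (j : ℕ) (hj : 1 ≤ j) :
    ∑ n ∈ range j, (if p n ∧ n ≠ 0 then a n else 0)
      = ∑ n ∈ range j, (if p n then a n else 0) - a 0 := by
  have h0 : (0 : ℕ) ∈ range j := Finset.mem_range.mpr hj
  rw [← Finset.sum_erase_add _ _ h0, ← Finset.sum_erase_add _ (fun n => if p n then a n else 0) h0]
  have herase : ∑ n ∈ (range j).erase 0, (if p n ∧ n ≠ 0 then a n else 0)
      = ∑ n ∈ (range j).erase 0, (if p n then a n else 0) := by
    refine Finset.sum_congr rfl fun n hn => ?_
    have := (Finset.mem_erase.mp hn).1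
    simp [this]
  rw [herase]
  simp [hp0]

lemma sum_if_and_ne_zero' (p : ℕ → Prop) [DecidablePred p] (hp0 : ¬ p 0) (a : ℕ → ℝ)
    (j : ℕ) :
    ∑ n ∈ range j, (if p n ∧ n ≠ 0 then a n else 0)
      = ∑ n ∈ range j, (if p n then a n else 0) := by
  refine Finset.sum_congr rfl fun n _ => ?_
  by_cases hn : n = 0
  · subst hn; simp [hp0]
  · simp [hn]

lemma main_id (j k : ℕ) (hj : 1 ≤ j) (c : ℝ) (hkc : 1 - c = (k : ℝ) * c)
    (y1 y2 : ℕ → ℝ) (h1 : ∀ n, j ≤ n → y1 n = 0) (h2 : ∀ n, j ≤ n → y2 n = 0) :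
    (∑ n ∈ range j, y1 n ^ 2
        - 2 * ∑ n ∈ range j, (if Even (n + 1) then y1 n * y1 (n + 1) else 0))
      - 2 * y1 0
      + (∑ n ∈ range j, y2 n ^ 2
        - 2 * ∑ n ∈ range j, (if Odd (n + 1) then y2 n * y2 (n + 1) else 0))
      + 2 * c * ∑ n ∈ range j, (-1 : ℝ) ^ n * (y1 n - y2 n)
    = (y1 0 - (k : ℝ) * c) ^ 2
      + ∑ n ∈ range j, (if Even (n + 1) then (y1 n - y1 (n + 1) - c) ^ 2 else 0)
      + ∑ n ∈ range j, (if Odd (n + 1) then (y2 n - y2 (n + 1) - c) ^ 2 else 0)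
      - ((k : ℝ) ^ 2 + (j : ℝ)) * c ^ 2 := by
  have hy1j : y1 j = 0 := h1 j le_rfl
  have hy2j : y2 j = 0 := h2 j le_rfl
  have conv1 : ∀ a : ℕ → ℝ, (∑ n ∈ range j, (if Even n then a n else 0))
      = ∑ n ∈ range j, (if Odd (n + 1) then a n else 0) := fun a =>
    Finset.sum_congr rfl fun n _ => by simp only [odd_succ_iff]
  have conv2 : ∀ a : ℕ → ℝ, (∑ n ∈ range j, (if Odd n then a n else 0))
      = ∑ n ∈ range j, (if Even (n + 1) then a n else 0) := fun a =>
    Finset.sum_congr rfl fun n _ => by simp only [even_succ_iff]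
  have HR1a : ∑ n ∈ range j, (if Even (n + 1) then y1 (n + 1) ^ 2 else 0)
      = ∑ n ∈ range j, (if Odd (n + 1) then y1 n ^ 2 else 0) - y1 0 ^ 2 := by
    rw [shift_sum Even (fun m => y1 m ^ 2) j]
    have hb : (if Even j ∧ j ≠ 0 then y1 j ^ 2 else 0) = 0 := by simp [hy1j]
    rw [hb, add_zero, sum_if_and_ne_zero Even Even.zero _ j hj, conv1 (fun m => y1 m ^ 2)]
  have HR1b : ∑ n ∈ range j, (if Even (n + 1) then y1 (n + 1) else 0)
      = ∑ n ∈ range j, (if Odd (n + 1) then y1 n else 0) - y1 0 := by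
    rw [shift_sum Even y1 j]
    have hb : (if Even j ∧ j ≠ 0 then y1 j else 0) = 0 := by simp [hy1j]
    rw [hb, add_zero, sum_if_and_ne_zero Even Even.zero _ j hj, conv1 y1]
  have hodd0 : ¬ Odd 0 := by simp
  have HR2a : ∑ n ∈ range j, (if Odd (n + 1) then y2 (n + 1) ^ 2 else 0)
      = ∑ n ∈ range j, (if Even (n + 1) then y2 n ^ 2 else 0) := by
    rw [shift_sum Odd (fun m => y2 m ^ 2) j]
    have hb : (if Odd j ∧ j ≠ 0 then y2 j ^ 2 else 0) = 0 := by simp [hy2j]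
    rw [hb, add_zero, sum_if_and_ne_zero' Odd hodd0, conv2 (fun m => y2 m ^ 2)]
  have HR2b : ∑ n ∈ range j, (if Odd (n + 1) then y2 (n + 1) else 0)
      = ∑ n ∈ range j, (if Even (n + 1) then y2 n else 0) := by
    rw [shift_sum Odd y2 j]
    have hb : (if Odd j ∧ j ≠ 0 then y2 j else 0) = 0 := by simp [hy2j]
    rw [hb, add_zero, sum_if_and_ne_zero' Odd hodd0, conv2 y2]
  have E1 : ∑ n ∈ range j, (if Even (n + 1) then (y1 n - y1 (n + 1) - c) ^ 2 else 0)
      = ∑ n ∈ range j, (if Even (n + 1) then y1 n ^ 2 else 0)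
        + ∑ n ∈ range j, (if Even (n + 1) then y1 (n + 1) ^ 2 else 0)
        - 2 * ∑ n ∈ range j, (if Even (n + 1) then y1 n * y1 (n + 1) else 0)
        - 2 * c * ∑ n ∈ range j, (if Even (n + 1) then y1 n else 0)
        + 2 * c * ∑ n ∈ range j, (if Even (n + 1) then y1 (n + 1) else 0)
        + c ^ 2 * ∑ n ∈ range j, (if Even (n + 1) then (1 : ℝ) else 0) := by
    have pt : ∀ n ∈ range j, (if Even (n + 1) then (y1 n - y1 (n + 1) - c) ^ 2 else 0)
        = (if Even (n + 1) then y1 n ^ 2 else 0)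
          + (if Even (n + 1) then y1 (n + 1) ^ 2 else 0)
          - 2 * (if Even (n + 1) then y1 n * y1 (n + 1) else 0)
          - 2 * c * (if Even (n + 1) then y1 n else 0)
          + 2 * c * (if Even (n + 1) then y1 (n + 1) else 0)
          + c ^ 2 * (if Even (n + 1) then (1 : ℝ) else 0) := fun n _ => by
      split_ifs <;> ring
    rw [Finset.sum_congr rfl pt]
    simp only [Finset.sum_add_distrib, Finset.sum_sub_distrib]
    simp only [← Finset.mul_sum]
  have E2 : ∑ n ∈ range j, (if Odd (n + 1) then (y2 n - y2 (n + 1) - c) ^ 2 else 0)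
      = ∑ n ∈ range j, (if Odd (n + 1) then y2 n ^ 2 else 0)
        + ∑ n ∈ range j, (if Odd (n + 1) then y2 (n + 1) ^ 2 else 0)
        - 2 * ∑ n ∈ range j, (if Odd (n + 1) then y2 n * y2 (n + 1) else 0)
        - 2 * c * ∑ n ∈ range j, (if Odd (n + 1) then y2 n else 0)
        + 2 * c * ∑ n ∈ range j, (if Odd (n + 1) then y2 (n + 1) else 0)
        + c ^ 2 * ∑ n ∈ range j, (if Odd (n + 1) then (1 : ℝ) else 0) := by
    have pt : ∀ n ∈ range j, (if Odd (n + 1) then (y2 n - y2 (n + 1) - c) ^ 2 else 0)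
        = (if Odd (n + 1) then y2 n ^ 2 else 0)
          + (if Odd (n + 1) then y2 (n + 1) ^ 2 else 0)
          - 2 * (if Odd (n + 1) then y2 n * y2 (n + 1) else 0)
          - 2 * c * (if Odd (n + 1) then y2 n else 0)
          + 2 * c * (if Odd (n + 1) then y2 (n + 1) else 0)
          + c ^ 2 * (if Odd (n + 1) then (1 : ℝ) else 0) := fun n _ => by
      split_ifs <;> ring
    rw [Finset.sum_congr rfl pt]
    simp only [Finset.sum_add_distrib, Finset.sum_sub_distrib]
    simp only [← Finset.mul_sum]
  have H1 : ∑ n ∈ range j, y1 n ^ 2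
      = ∑ n ∈ range j, (if Even (n + 1) then y1 n ^ 2 else 0)
        + ∑ n ∈ range j, (if Odd (n + 1) then y1 n ^ 2 else 0) := by
    rw [← Finset.sum_add_distrib]
    refine Finset.sum_congr rfl fun n _ => ?_
    rcases Nat.even_or_odd (n + 1) with h | h
    · simp [h, Nat.not_odd_iff_even.mpr h]
    · simp [h, Nat.not_even_iff_odd.mpr h]
  have H2 : ∑ n ∈ range j, y2 n ^ 2
      = ∑ n ∈ range j, (if Even (n + 1) then y2 n ^ 2 else 0)
        + ∑ n ∈ range j, (if Odd (n + 1) then y2 n ^ 2 else 0) := by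
    rw [← Finset.sum_add_distrib]
    refine Finset.sum_congr rfl fun n _ => ?_
    rcases Nat.even_or_odd (n + 1) with h | h
    · simp [h, Nat.not_odd_iff_even.mpr h]
    · simp [h, Nat.not_even_iff_odd.mpr h]
  have Hav : ∑ n ∈ range j, (-1 : ℝ) ^ n * (y1 n - y2 n)
      = ((∑ n ∈ range j, (if Odd (n + 1) then y1 n else 0))
          - ∑ n ∈ range j, (if Odd (n + 1) then y2 n else 0))
        - ((∑ n ∈ range j, (if Even (n + 1) then y1 n else 0))
          - ∑ n ∈ range j, (if Even (n + 1) then y2 n else 0)) := by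
    rw [← Finset.sum_sub_distrib, ← Finset.sum_sub_distrib, ← Finset.sum_sub_distrib]
    refine Finset.sum_congr rfl fun n _ => ?_
    rcases Nat.even_or_odd n with h | h
    · have ho : Odd (n + 1) := (odd_succ_iff n).mpr h
      have he : ¬ Even (n + 1) := by rw [even_succ_iff]; exact Nat.not_odd_iff_even.mpr h
      rw [if_pos ho, if_pos ho, if_neg he, if_neg he, h.neg_one_pow]; ring
    · have he : Even (n + 1) := (even_succ_iff n).mpr h
      have ho : ¬ Odd (n + 1) := by rw [odd_succ_iff]; exact Nat.not_even_iff_odd.mpr h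
      rw [if_neg ho, if_neg ho, if_pos he, if_pos he, h.neg_one_pow]; ring
  have HN : ∑ n ∈ range j, (if Even (n + 1) then (1 : ℝ) else 0)
      + ∑ n ∈ range j, (if Odd (n + 1) then (1 : ℝ) else 0) = (j : ℝ) := by
    rw [← Finset.sum_add_distrib]
    have pt : ∀ n ∈ range j, ((if Even (n + 1) then (1 : ℝ) else 0)
        + (if Odd (n + 1) then (1 : ℝ) else 0)) = 1 := fun n _ => by
      rcases Nat.even_or_odd (n + 1) with h | h
      · simp [h, Nat.not_odd_iff_even.mpr h]
      · simp [h, Nat.not_even_iff_odd.mpr h]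
    rw [Finset.sum_congr rfl pt, Finset.sum_const, Finset.card_range]
    simp
  rw [H1, H2, Hav, E1, HR1a, HR1b, E2, HR2a, HR2b]
  linear_combination (-2 * y1 0) * hkc + (-c ^ 2) * HN

lemma fk_eq (d : ℕ) (L : ℝ) (j k : ℕ) (hj : 1 ≤ j) (hjk : j ≤ k) (hkd : k ≤ d)
    (x1 x2 : Fin d → ℝ) (h1 : x1 ∈ Rj d j) (h2 : x2 ∈ Rj d j) :
    fk d L k x1 x2
      = L / 8 * ((zext d x1 0 - (k : ℝ) * (1 / ((k : ℝ) + 1))) ^ 2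
        + ∑ n ∈ range j, (if Even (n + 1) then
            (zext d x1 n - zext d x1 (n + 1) - 1 / ((k : ℝ) + 1)) ^ 2 else 0)
        + ∑ n ∈ range j, (if Odd (n + 1) then
            (zext d x2 n - zext d x2 (n + 1) - 1 / ((k : ℝ) + 1)) ^ 2 else 0)
        - ((k : ℝ) ^ 2 + (j : ℝ)) * (1 / ((k : ℝ) + 1)) ^ 2) := by
  have hd : 1 ≤ d := (hj.trans hjk).trans hkd
  have hk0 : ((k : ℝ) + 1) ≠ 0 := by positivity
  have hkc : 1 - 1 / ((k : ℝ) + 1) = (k : ℝ) * (1 / ((k : ℝ) + 1)) := by field_simp; ring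
  have key := main_id j k hj (1 / ((k : ℝ) + 1)) hkc (zext d x1) (zext d x2)
    (fun n h => zext_zero h1 h) (fun n h => zext_zero h2 h)
  rw [fk, Q1form d k j hjk hkd x1 h1, Q2form d k j hjk hkd x2 h2, e1form d hd x1,
    avecform d k j hjk hkd x1 x2 h1 h2]
  have hco : L / (4 * ((k : ℝ) + 1)) = L / 8 * (2 * (1 / ((k : ℝ) + 1))) := by
    field_simp
    ring
  rw [hco]
  linear_combination (L / 8) * key

noncomputable def x1star (d j k : ℕ) : Fin d → ℝ := fun i =>
  if (i : ℕ) = 0 then (k : ℝ) * (1 / ((k : ℝ) + 1))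
  else if (i : ℕ) < j ∧ Odd (i : ℕ) then 1 / ((k : ℝ) + 1) else 0

noncomputable def x2star (d j k : ℕ) : Fin d → ℝ := fun i =>
  if (i : ℕ) < j ∧ Even (i : ℕ) then 1 / ((k : ℝ) + 1) else 0

lemma x1star_mem (d j k : ℕ) (hj : 1 ≤ j) : x1star d j k ∈ Rj d j := fun i hi => by
  unfold x1star
  have h0 : (i : ℕ) ≠ 0 := by omega
  rw [if_neg h0, if_neg]
  rintro ⟨h, -⟩
  omega

lemma x2star_mem (d j k : ℕ) : x2star d j k ∈ Rj d j := fun i hi => by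
  unfold x2star
  rw [if_neg]
  rintro ⟨h, -⟩
  omega

lemma zext_x1star (d j k : ℕ) (hjd : j ≤ d) (hd : 1 ≤ d) (n : ℕ) :
    zext d (x1star d j k) n
      = if n = 0 then (k : ℝ) * (1 / ((k : ℝ) + 1))
        else if n < j ∧ Odd n then 1 / ((k : ℝ) + 1) else 0 := by
  unfold zext x1star
  split
  · rfl
  · rename_i h
    have h1 : n ≠ 0 := by omega
    have h2 : ¬ (n < j ∧ Odd n) := by rintro ⟨hh, -⟩; omega
    rw [if_neg h1, if_neg h2]

lemma zext_x2star (d j k : ℕ) (hjd : j ≤ d) (n : ℕ) :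
    zext d (x2star d j k) n
      = if n < j ∧ Even n then 1 / ((k : ℝ) + 1) else 0 := by
  unfold zext x2star
  split
  · rfl
  · rename_i h
    have h2 : ¬ (n < j ∧ Even n) := by rintro ⟨hh, -⟩; omega
    rw [if_neg h2]

theorem stmt_6 (d : ℕ) (L : ℝ) (hL : 0 < L) (j k : ℕ)
    (hj : 1 ≤ j) (hjk : j ≤ k) (hkd : k ≤ d) :
    IsLeast {v : ℝ | ∃ x1 ∈ Rj d j, ∃ x2 ∈ Rj d j, v = fk d L k x1 x2}
      (-(L / 8) * ((k : ℝ) ^ 2 / ((k : ℝ) + 1) ^ 2 + (j : ℝ) / ((k : ℝ) + 1) ^ 2)) := by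
  have hd : 1 ≤ d := (hj.trans hjk).trans hkd
  have hjd : j ≤ d := hjk.trans hkd
  have hk0 : ((k : ℝ) + 1) ≠ 0 := by positivity
  have hmin : -(L / 8) * ((k : ℝ) ^ 2 / ((k : ℝ) + 1) ^ 2 + (j : ℝ) / ((k : ℝ) + 1) ^ 2)
      = L / 8 * ((0 : ℝ) + 0 + 0 - ((k : ℝ) ^ 2 + (j : ℝ)) * (1 / ((k : ℝ) + 1)) ^ 2) := by
    field_simp
    ring
  constructor
  · refine ⟨x1star d j k, x1star_mem d j k hj, x2star d j k, x2star_mem d j k, ?_⟩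
    rw [fk_eq d L j k hj hjk hkd _ _ (x1star_mem d j k hj) (x2star_mem d j k), hmin]
    have hz0 : (zext d (x1star d j k) 0 - (k : ℝ) * (1 / ((k : ℝ) + 1))) ^ 2 = 0 := by
      rw [zext_x1star d j k hjd hd 0]
      simp
    have Z1 : ∑ n ∈ range j, (if Even (n + 1) then
        (zext d (x1star d j k) n - zext d (x1star d j k) (n + 1) - 1 / ((k : ℝ) + 1)) ^ 2
        else 0) = 0 := by
      refine Finset.sum_eq_zero fun n hn => ?_
      by_cases h : Even (n + 1)
      · have hodd : Odd n := (even_succ_iff n).mp h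
        have hn0 : n ≠ 0 := by rintro rfl; simpa using hodd
        have hnj : n < j := Finset.mem_range.mp hn
        rw [if_pos h, zext_x1star d j k hjd hd n, zext_x1star d j k hjd hd (n + 1),
          if_neg hn0, if_pos ⟨hnj, hodd⟩, if_neg (Nat.succ_ne_zero n),
          if_neg (fun hh => (Nat.not_odd_iff_even.mpr h) hh.2)]
        ring_nf
      · rw [if_neg h]
    have Z2 : ∑ n ∈ range j, (if Odd (n + 1) then
        (zext d (x2star d j k) n - zext d (x2star d j k) (n + 1) - 1 / ((k : ℝ) + 1)) ^ 2
        else 0) = 0 := by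
      refine Finset.sum_eq_zero fun n hn => ?_
      by_cases h : Odd (n + 1)
      · have heven : Even n := (odd_succ_iff n).mp h
        have hnj : n < j := Finset.mem_range.mp hn
        rw [if_pos h, zext_x2star d j k hjd n, zext_x2star d j k hjd (n + 1),
          if_pos ⟨hnj, heven⟩, if_neg (fun hh => (Nat.not_even_iff_odd.mpr h) hh.2)]
        ring_nf
      · rw [if_neg h]
    rw [hz0, Z1, Z2]
  · rintro v ⟨x1, h1, x2, h2, rfl⟩
    rw [fk_eq d L j k hj hjk hkd x1 x2 h1 h2, hmin]
    have hA : (0 : ℝ) ≤ (zext d x1 0 - (k : ℝ) * (1 / ((k : ℝ) + 1))) ^ 2 := sq_nonneg _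
    have hB : (0 : ℝ) ≤ ∑ n ∈ range j, (if Even (n + 1) then
        (zext d x1 n - zext d x1 (n + 1) - 1 / ((k : ℝ) + 1)) ^ 2 else 0) :=
      Finset.sum_nonneg fun n _ => by split_ifs; exacts [sq_nonneg _, le_rfl]
    have hC : (0 : ℝ) ≤ ∑ n ∈ range j, (if Odd (n + 1) then
        (zext d x2 n - zext d x2 (n + 1) - 1 / ((k : ℝ) + 1)) ^ 2 else 0) :=
      Finset.sum_nonneg fun n _ => by split_ifs; exacts [sq_nonneg _, le_rfl]
    have hL8 : (0 : ℝ) ≤ L / 8 := by positivity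
    apply mul_le_mul_of_nonneg_left _ hL8
    linarith
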